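/- Let r > 1 and write r = l + l' with l the smallest integer such that 0 < l' ≤ l. Let β̄ denote the reduction of β modulo ϖ^r. Then {g ∈ Sp_{2n}(O/ϖ^r O) : g·β̄ ≡ β̄·g (mod ϖ^{l'})} equals the set of products t·h where t ∈ Sp_{2n}(O/ϖ^r O) lies in the subring of M_{2n}(O/ϖ^r O) generated by β̄ and h ∈ Sp_{2n}(O/ϖ^r O) satisfies h ≡ 1_{2n} (mod ϖ^{l'}). -/

import Mathlib

open Matrix Polynomial

/-- The matrix `J = [[0, I'ₙ],[−I'ₙ, 0]]` where `I'ₙ` is the antidiagonal identity. -/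
def Jmat (R : Type*) [CommRing R] (n : ℕ) : Matrix (Fin (2*n)) (Fin (2*n)) R :=
  Matrix.of fun i j =>
    if (i : ℕ) + (j : ℕ) = 2*n - 1 then (if (i : ℕ) < n then (1 : R) else -1) else 0

/-- The symplectic group `Sp_{2n}(R)` as a set of matrices. -/
def SpSet (n : ℕ) (R : Type*) [CommRing R] : Set (Matrix (Fin (2*n)) (Fin (2*n)) R) :=
  {g | IsUnit g.det ∧ g * Jmat R n * gᵀ = Jmat R n}

/-- The symplectic Lie algebra `sp_{2n}(R)` as a set of matrices. -/
def spSet (n : ℕ) (R : Type*) [CommRing R] : Set (Matrix (Fin (2*n)) (Fin (2*n)) R) :=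
  {X | X * Jmat R n + Jmat R n * Xᵀ = 0}

section Helpers

lemma Jmat_sq (R : Type*) [CommRing R] (n : ℕ) (hn : 1 ≤ n) :
    Jmat R n * Jmat R n = -1 := by
  ext i j
  have hi : (i : ℕ) < 2*n := i.isLt
  have hk : 2*n - 1 - (i:ℕ) < 2*n := by omega
  set k₀ : Fin (2*n) := ⟨2*n - 1 - (i:ℕ), hk⟩ with hk₀
  rw [Matrix.mul_apply]
  rw [Finset.sum_eq_single k₀]
  · simp only [Jmat, Matrix.of_apply, hk₀]
    have h1 : (i:ℕ) + (2*n - 1 - (i:ℕ)) = 2*n - 1 := by omega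
    rw [if_pos h1]
    by_cases hij : j = i
    · subst hij
      have h2 : (2*n - 1 - (j:ℕ)) + (j:ℕ) = 2*n-1 := by omega
      rw [if_pos h2]
      have : (-1 : Matrix (Fin (2*n)) (Fin (2*n)) R) j j = -1 := by simp
      rw [this]
      by_cases hjn : (j:ℕ) < n
      · rw [if_pos hjn, if_neg (by omega)]; ring
      · rw [if_neg hjn, if_pos (by omega)]; ring
    · have h2 : ¬ ((2*n - 1 - (i:ℕ)) + (j:ℕ) = 2*n-1) := by
        have : (j:ℕ) ≠ (i:ℕ) := fun h => hij (Fin.ext h)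
        omega
      rw [if_neg h2]
      have : (-1 : Matrix (Fin (2*n)) (Fin (2*n)) R) i j = 0 := by
        simp [Matrix.one_apply, hij, Ne.symm hij]
      rw [this, mul_zero]
  · intro k _ hkne
    have : ¬ ((i:ℕ) + (k:ℕ) = 2*n-1) := by
      intro h
      apply hkne; apply Fin.ext; simp [hk₀]; omega
    simp only [Jmat, Matrix.of_apply, if_neg this, zero_mul]
  · intro h; exact absurd (Finset.mem_univ k₀) h

lemma Jmat_map {R S : Type*} [CommRing R] [CommRing S] (f : R →+* S) (n : ℕ) :
    (Jmat R n).map f = Jmat S n := by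
  ext i j
  simp [Jmat, apply_ite f]

variable {O : Type*} [CommRing O] (ϖ : O)

lemma span_pow_le {k m : ℕ} (h : m ≤ k) :
    Ideal.span {ϖ^k} ≤ Ideal.span {ϖ^m} := by
  rw [Ideal.span_singleton_le_span_singleton]
  exact pow_dvd_pow ϖ h

lemma isUnit_mk_pow_of_isUnit_mk {k : ℕ} (x : O)
    (h : IsUnit (Ideal.Quotient.mk (Ideal.span {ϖ}) x)) :
    IsUnit (Ideal.Quotient.mk (Ideal.span {ϖ^k}) x) := by
  rw [isUnit_iff_exists_inv] at h
  obtain ⟨z, hz⟩ := h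
  obtain ⟨y, rfl⟩ := Ideal.Quotient.mk_surjective z
  rw [← _root_.map_mul, ← map_one (Ideal.Quotient.mk (Ideal.span {ϖ})),
    Ideal.Quotient.eq] at hz
  rw [Ideal.mem_span_singleton'] at hz
  obtain ⟨c, hc⟩ := hz
  have key : (∑ i ∈ Finset.range k, (-(c*ϖ))^i) * (c*ϖ + 1) = 1 - (-(c*ϖ))^k := by
    have := geom_sum_mul (-(c*ϖ)) k
    linear_combination -this
  rw [isUnit_iff_exists_inv]
  refine ⟨Ideal.Quotient.mk _ (y * (∑ i ∈ Finset.range k, (-(c*ϖ))^i)), ?_⟩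
  rw [← _root_.map_mul, ← map_one (Ideal.Quotient.mk (Ideal.span {ϖ^k})),
    Ideal.Quotient.eq]
  have h2 : x * (y * (∑ i ∈ Finset.range k, (-(c*ϖ))^i)) - 1 = - (-(c*ϖ))^k := by
    linear_combination key - (∑ i ∈ Finset.range k, (-(c*ϖ))^i) * hc
  rw [h2, Ideal.mem_span_singleton, dvd_neg, neg_pow, mul_pow]
  exact ((dvd_mul_left (ϖ^k) (c^k)).mul_left ((-1:O)^k))

lemma mem_span_mk_iff {r m : ℕ} (h : m ≤ r) (x : O) :
    Ideal.Quotient.mk (Ideal.span {ϖ^r}) x ∈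
      Ideal.span {Ideal.Quotient.mk (Ideal.span {ϖ^r}) (ϖ^m)} ↔
    Ideal.Quotient.mk (Ideal.span {ϖ^m}) x = 0 := by
  constructor
  · intro hx
    rw [Ideal.mem_span_singleton'] at hx
    obtain ⟨z, hz⟩ := hx
    obtain ⟨c, rfl⟩ := Ideal.Quotient.mk_surjective z
    rw [← _root_.map_mul, Ideal.Quotient.eq] at hz
    rw [Ideal.mem_span_singleton'] at hz
    obtain ⟨d, hd⟩ := hz
    rw [Ideal.Quotient.eq_zero_iff_mem, Ideal.mem_span_singleton']
    refine ⟨c - d * ϖ^(r-m), ?_⟩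
    have h3 : ϖ^(r-m) * ϖ^m = ϖ^r := by rw [← pow_add]; congr 1; omega
    linear_combination -hd - d * h3
  · intro hx
    rw [Ideal.Quotient.eq_zero_iff_mem, Ideal.mem_span_singleton'] at hx
    obtain ⟨c, hc⟩ := hx
    rw [Ideal.mem_span_singleton']
    exact ⟨Ideal.Quotient.mk _ c, by rw [← _root_.map_mul, hc]⟩

end Helpers

section Cent
variable {N : ℕ} {S : Type*} [CommRing S]

lemma aeval_colPoly {A : Type*} [Ring A] [Algebra S A] (x : A) (v : Fin N → S) :
    Polynomial.aeval x (∑ j : Fin N, C (v j) * X^(j:ℕ)) = ∑ j : Fin N, v j • x^(j:ℕ) := by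
  rw [map_sum]
  refine Finset.sum_congr rfl fun j _ => ?_
  rw [_root_.map_mul, aeval_C, map_pow, aeval_X, Algebra.smul_def]

lemma colPoly_coeff (v : Fin N → S) (j₀ : Fin N) :
    (∑ j : Fin N, C (v j) * X^(j:ℕ)).coeff (j₀:ℕ) = v j₀ := by
  rw [finset_sum_coeff]
  rw [Finset.sum_eq_single j₀]
  · simp [coeff_C_mul, coeff_X_pow]
  · intro j _ hj
    have : (j₀:ℕ) ≠ (j:ℕ) := fun h => hj (Fin.ext h.symm)
    simp [coeff_C_mul, coeff_X_pow, this]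
  · simp

lemma colPoly_degree (hN : 0 < N) (v : Fin N → S) :
    (∑ j : Fin N, C (v j) * X^(j:ℕ)).degree < (N : WithBot ℕ) := by
  refine lt_of_le_of_lt (degree_sum_le _ _) ?_
  rw [Finset.sup_lt_iff (by exact_mod_cast WithBot.bot_lt_coe N)]
  intro j _
  refine lt_of_le_of_lt (degree_C_mul_X_pow_le _ _) ?_
  exact_mod_cast j.isLt

lemma cent {F : Type*} [Field F] (hN : 0 < N) (φ : S →+* F)
    (hunit : ∀ x : S, IsUnit (φ x) → IsUnit x)
    (β' g : Matrix (Fin N) (Fin N) S)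
    (hirr : Irreducible ((Matrix.charpoly β').map φ))
    (hg : g * β' = β' * g) :
    ∃ P : Polynomial S, g = Polynomial.aeval β' P := by
  classical
  set z : Fin N := ⟨0, hN⟩ with hz
  set B : Matrix (Fin N) (Fin N) S := Matrix.of (fun i j => (β'^(j:ℕ)) i z) with hB
  set βF : Matrix (Fin N) (Fin N) F := β'.map φ with hβF
  have hpow : ∀ k : ℕ, (β'^k).map φ = βF^k := by
    intro k
    rw [hβF, ← RingHom.mapMatrix_apply, ← RingHom.mapMatrix_apply, map_pow]
  have hBF : B.map φ = Matrix.of (fun (i j : Fin N) => (βF^((j:Fin N):ℕ)) i z) := by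
    ext i j
    simp only [Matrix.map_apply, hB, Matrix.of_apply, ← hpow]
  have hdetF : (B.map φ).det ≠ 0 := by
    intro hdet
    obtain ⟨v, hv0, hvz⟩ := (Matrix.exists_mulVec_eq_zero_iff).mpr hdet
    set Pv : Polynomial F := ∑ j : Fin N, C (v j) * X^(j:ℕ) with hPv
    have hPvne : Pv ≠ 0 := by
      obtain ⟨j₀, hj₀⟩ := Function.ne_iff.mp hv0
      simp only [Pi.zero_apply] at hj₀
      intro h
      exact hj₀ (by rw [← colPoly_coeff v j₀, ← hPv, h, coeff_zero])
    have hcol : ∀ i, (Polynomial.aeval βF Pv) i z = 0 := by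
      intro i
      rw [hPv, aeval_colPoly]
      have : (∑ j : Fin N, v j • βF^(j:ℕ)) i z = ∑ j : Fin N, (B.map φ) i j * v j := by
        rw [Matrix.sum_apply]
        refine Finset.sum_congr rfl fun j _ => ?_
        rw [hBF]
        simp [mul_comm]
      rw [this]
      have := congrFun hvz i
      rw [Matrix.mulVec, dotProduct] at this
      exact this
    have hchar : (Matrix.charpoly β').map φ = Matrix.charpoly βF := by
      rw [hβF, Matrix.charpoly_map]
    have hndvd : ¬ ((Matrix.charpoly β').map φ ∣ Pv) := by
      intro hdvd
      apply hPvne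
      refine Polynomial.eq_zero_of_dvd_of_degree_lt hdvd ?_
      rw [hchar, Matrix.charpoly_degree_eq_dim]
      simpa using colPoly_degree hN v
    have hcop : IsCoprime ((Matrix.charpoly β').map φ) Pv :=
      (hirr.coprime_iff_not_dvd).mpr hndvd
    obtain ⟨u, w, huw⟩ := hcop
    have := congrArg (Polynomial.aeval βF) huw
    rw [map_add, _root_.map_mul, _root_.map_mul, _root_.map_one, hchar,
      Matrix.aeval_self_charpoly, mul_zero, zero_add] at this
    have h1 := congrFun (congrFun this z) z
    rw [Matrix.mul_apply, Matrix.one_apply_eq] at h1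
    have h0 : ∀ k, (Polynomial.aeval βF w) z k * (Polynomial.aeval βF Pv) k z = 0 := by
      intro k
      rw [hcol k, mul_zero]
    rw [Finset.sum_congr rfl (fun k _ => h0 k), Finset.sum_const_zero] at h1
    exact one_ne_zero h1.symm
  have hdetB : IsUnit B.det := by
    apply hunit
    rw [RingHom.map_det]
    exact (Ne.isUnit hdetF)
  set cvec : Fin N → S := B⁻¹ *ᵥ (fun i => g i z) with hc
  have hBc : B *ᵥ cvec = fun i => g i z := by
    rw [hc, Matrix.mulVec_mulVec, Matrix.mul_nonsing_inv B hdetB, Matrix.one_mulVec]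
  set A : Matrix (Fin N) (Fin N) S := ∑ j : Fin N, cvec j • β'^(j:ℕ) with hA
  have hAcomm : ∀ k : ℕ, A * β'^k = β'^k * A := by
    intro k
    rw [hA, Finset.sum_mul, Finset.mul_sum]
    refine Finset.sum_congr rfl fun j _ => ?_
    rw [Matrix.smul_mul, Matrix.mul_smul, ← pow_add, ← pow_add, Nat.add_comm]
  have hgcomm : ∀ k : ℕ, g * β'^k = β'^k * g := by
    intro k
    exact (Commute.pow_right (by exact hg) k)
  have hAz : ∀ i, A i z = g i z := by
    intro i
    have h2 := congrFun hBc i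
    rw [Matrix.mulVec, dotProduct] at h2
    rw [hA, Matrix.sum_apply]
    rw [← h2]
    refine Finset.sum_congr rfl fun j _ => ?_
    rw [hB]
    simp [mul_comm]
  have hgBAB : g * B = A * B := by
    ext i j
    have e1 : (g * B) i j = (g * β'^(j:ℕ)) i z := by
      rw [Matrix.mul_apply, Matrix.mul_apply]
      exact Finset.sum_congr rfl fun k _ => by rw [hB]; rfl
    have e2 : (A * B) i j = (A * β'^(j:ℕ)) i z := by
      rw [Matrix.mul_apply, Matrix.mul_apply]
      exact Finset.sum_congr rfl fun k _ => by rw [hB]; rfl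
    rw [e1, e2, hgcomm, hAcomm, Matrix.mul_apply, Matrix.mul_apply]
    exact Finset.sum_congr rfl fun k _ => by rw [hAz k]
  have hgA : g = A := by
    have := congrArg (fun M => M * B⁻¹) hgBAB
    simpa [Matrix.mul_assoc, Matrix.mul_nonsing_inv B hdetB] using this
  refine ⟨∑ j : Fin N, C (cvec j) * X^(j:ℕ), ?_⟩
  rw [aeval_colPoly, hgA, hA]

end Cent

section Sigma
variable {N : ℕ} {R : Type*} [CommRing R]

lemma aeval_matrix_map {S : Type*} [CommRing S] (f : R →+* S)
    (M : Matrix (Fin N) (Fin N) R) (P : Polynomial R) :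
    (Polynomial.aeval M P).map f = Polynomial.aeval (M.map f) (P.map f) := by
  classical
  rw [Polynomial.aeval_def, Polynomial.aeval_def, Polynomial.eval₂_map]
  rw [← RingHom.mapMatrix_apply]
  rw [Polynomial.hom_eval₂]
  congr 1
  refine RingHom.ext fun a => ?_
  ext i j
  simp [Matrix.algebraMap_matrix_apply, apply_ite f]

lemma sigma_pow (Jm Jinv β : Matrix (Fin N) (Fin N) R)
    (hJi : Jm * Jinv = 1) (hJi' : Jinv * Jm = 1)
    (hβσ : Jm * βᵀ * Jinv = -β) (k : ℕ) :
    Jm * (β^k)ᵀ * Jinv = (-β)^k := by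
  induction k with
  | zero => simpa using hJi
  | succ k ih =>
    rw [pow_succ, Matrix.transpose_mul]
    calc Jm * (βᵀ * (β^k)ᵀ) * Jinv
        = (Jm * βᵀ * Jinv) * (Jm * (β^k)ᵀ * Jinv) := by
          simp only [Matrix.mul_assoc]
          rw [← Matrix.mul_assoc Jinv Jm ((β^k)ᵀ * Jinv), hJi', Matrix.one_mul]
      _ = (-β) * (-β)^k := by rw [hβσ, ih]
      _ = (-β)^(k+1) := by rw [← pow_succ']

lemma sigma_aeval (Jm Jinv β : Matrix (Fin N) (Fin N) R)
    (hJi : Jm * Jinv = 1) (hJi' : Jinv * Jm = 1)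
    (hβσ : Jm * βᵀ * Jinv = -β) (Q : Polynomial R) :
    Jm * (Polynomial.aeval β Q)ᵀ * Jinv = Polynomial.aeval (-β) Q := by
  induction Q using Polynomial.induction_on' with
  | add p q hp hq =>
    rw [map_add, Matrix.transpose_add, Matrix.mul_add, Matrix.add_mul, hp, hq, map_add]
  | monomial k a =>
    have h1 : ∀ M : Matrix (Fin N) (Fin N) R, Polynomial.aeval M (monomial k a) = a • M^k := by
      intro M
      rw [Polynomial.aeval_monomial, Algebra.algebraMap_eq_smul_one, Matrix.smul_mul,
        Matrix.one_mul]
    rw [h1, h1, Matrix.transpose_smul, Matrix.mul_smul, Matrix.smul_mul]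
    rw [sigma_pow Jm Jinv β hJi hJi' hβσ k]

end Sigma

section Ent
variable {R : Type*} [CommRing R] {N : ℕ} (I : Ideal R)

lemma ent_mul_left {X : Matrix (Fin N) (Fin N) R} (Y : Matrix (Fin N) (Fin N) R)
    (h : ∀ a b, X a b ∈ I) : ∀ a b, (Y * X) a b ∈ I := by
  intro a b
  rw [Matrix.mul_apply]
  exact Ideal.sum_mem _ fun k _ => I.mul_mem_left _ (h k b)

lemma ent_mul_right {X : Matrix (Fin N) (Fin N) R} (Y : Matrix (Fin N) (Fin N) R)
    (h : ∀ a b, X a b ∈ I) : ∀ a b, (X * Y) a b ∈ I := by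
  intro a b
  rw [Matrix.mul_apply]
  exact Ideal.sum_mem _ fun k _ => I.mul_mem_right _ (h a k)

lemma ent_decomp {d : R} {X : Matrix (Fin N) (Fin N) R}
    (h : ∀ a b, X a b ∈ Ideal.span {d}) : ∃ X', X = d • X' := by
  choose f hf using fun a b => Ideal.mem_span_singleton'.mp (h a b)
  refine ⟨Matrix.of (fun a b => f a b), ?_⟩
  ext a b
  rw [Matrix.smul_apply, Matrix.of_apply, smul_eq_mul, mul_comm]
  exact (hf a b).symm

lemma ent_cube_zero {d : R} (hd : d^3 = 0) {X : Matrix (Fin N) (Fin N) R}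
    (h : ∀ a b, X a b ∈ Ideal.span {d}) : X^3 = 0 := by
  obtain ⟨X', rfl⟩ := ent_decomp h
  rw [_root_.smul_pow, hd, zero_smul]

end Ent

section PolyId
variable {A : Type*} [CommRing A]

lemma sq_id (ch E : A) (hch : 2*ch = 1) :
    (1 + (ch*E - ch^3*E^2))^2 = 1 + E + E^3*(ch^6*E - 2*ch^4) := by
  linear_combination (E - ch^2*E^2) * hch

lemma main_id (ch E : A) (hch : 2*ch = 1) :
    ∃ W, (1 + E) * ((1 - (ch*E - ch^3*E^2) + (ch*E - ch^3*E^2)^2)^2) = 1 + E^3 * W := by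
  refine ⟨2*(ch - ch^3*E)^3 + E^3*(ch - ch^3*E)^6
    - (ch^6*E - 2*ch^4)*((1 - (ch*E - ch^3*E^2) + (ch*E - ch^3*E^2)^2)^2), ?_⟩
  linear_combination
    (-( (1 - (ch*E - ch^3*E^2) + (ch*E - ch^3*E^2)^2)^2)) * (sq_id ch E hch)

end PolyId

set_option maxHeartbeats 3200000 in
/-- For `r = l + l' > 1` with `0 < l' ≤ l ≤ l' + 1`, the set
`{g ∈ Sp_{2n}(O/ϖ^r O) : g·β̄ ≡ β̄·g (mod ϖ^{l'})}` equals the set of products `t·h`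
with `t ∈ Sp_{2n}(O/ϖ^r O)` lying in the subring of `M_{2n}(O/ϖ^r O)` generated by `β̄`
and `h ∈ Sp_{2n}(O/ϖ^r O)` with `h ≡ 1 (mod ϖ^{l'})`. -/
theorem stmt14 (n : ℕ) (hn : 1 ≤ n)
    (O : Type*) [CommRing O] [IsDomain O] [IsDiscreteValuationRing O]
    (ϖ : O) (hϖ : Irreducible ϖ) [IsAdicComplete (Ideal.span {ϖ}) O]
    [Finite (O ⧸ Ideal.span {ϖ})] (q : ℕ)
    (hq : Nat.card (O ⧸ Ideal.span {ϖ}) = q) (hodd : Odd q)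
    (β : Matrix (Fin (2*n)) (Fin (2*n)) O) (hβ : β ∈ spSet n O)
    (hirr : Irreducible (β.charpoly.map (Ideal.Quotient.mk (Ideal.span {ϖ}))))
    (r l l' : ℕ) (hr : 1 < r) (hrll : r = l + l') (hl' : 0 < l') (hl'l : l' ≤ l)
    (hlmin : l ≤ l' + 1) :
    {g | g ∈ SpSet n (O ⧸ Ideal.span {ϖ^r}) ∧
        ∀ a b : Fin (2*n),
          (g * β.map (Ideal.Quotient.mk (Ideal.span {ϖ^r}))
            - β.map (Ideal.Quotient.mk (Ideal.span {ϖ^r})) * g) a b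
            ∈ Ideal.span {Ideal.Quotient.mk (Ideal.span {ϖ^r}) (ϖ^l')}}
      = {x | ∃ t ∈ SpSet n (O ⧸ Ideal.span {ϖ^r}),
          t ∈ Algebra.adjoin (O ⧸ Ideal.span {ϖ^r})
              {β.map (Ideal.Quotient.mk (Ideal.span {ϖ^r}))} ∧
          ∃ h ∈ SpSet n (O ⧸ Ideal.span {ϖ^r}),
            (∀ a b : Fin (2*n),
              (h - 1) a b ∈ Ideal.span {Ideal.Quotient.mk (Ideal.span {ϖ^r}) (ϖ^l')}) ∧
            x = t * h} := by
  classical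
  have hn2 : 0 < 2*n := by omega
  have hl'r : l' ≤ r := by omega
  have h1l' : 1 ≤ l' := hl'
  have h1r : 1 ≤ r := by omega
  have h3l' : r ≤ l'*3 := by omega
  set mkr := Ideal.Quotient.mk (Ideal.span {ϖ^r}) with hmkr
  set mkl := Ideal.Quotient.mk (Ideal.span {ϖ^l'}) with hmkl
  set mk1 := Ideal.Quotient.mk (Ideal.span {ϖ}) with hmk1
  set βr := β.map mkr with hβrdef
  set d : O ⧸ Ideal.span {ϖ^r} := mkr (ϖ^l') with hd
  set Jr := Jmat (O ⧸ Ideal.span {ϖ^r}) n with hJrdef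
  have hfacle : Ideal.span {ϖ^r} ≤ Ideal.span {ϖ^l'} := span_pow_le ϖ hl'r
  have hfacle1 : Ideal.span {ϖ^l'} ≤ Ideal.span {ϖ} := by
    have := span_pow_le ϖ h1l'
    rwa [pow_one] at this
  set fac : O ⧸ Ideal.span {ϖ^r} →+* O ⧸ Ideal.span {ϖ^l'} :=
    Ideal.Quotient.factor hfacle with hfacdef
  set φ : O ⧸ Ideal.span {ϖ^l'} →+* O ⧸ Ideal.span {ϖ} :=
    Ideal.Quotient.factor hfacle1 with hφdef
  -- residue field
  haveI hmax : (Ideal.span {ϖ}).IsMaximal := by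
    rw [← hϖ.maximalIdeal_eq]
    exact IsLocalRing.maximalIdeal.isMaximal O
  letI : Field (O ⧸ Ideal.span {ϖ}) := Ideal.Quotient.field _
  -- unit transfer
  have hunit_r : ∀ x : O, IsUnit (mk1 x) → IsUnit (mkr x) :=
    fun x hx => isUnit_mk_pow_of_isUnit_mk ϖ x hx
  have hunit_l : ∀ x : O, IsUnit (mk1 x) → IsUnit (mkl x) :=
    fun x hx => isUnit_mk_pow_of_isUnit_mk ϖ x hx
  have hφmkl : φ.comp mkl = mk1 := Ideal.Quotient.factor_comp_mk _
  have hφmk : ∀ x : O, φ (mkl x) = mk1 x := fun x => Ideal.Quotient.factor_mk _ x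
  have hunitφ : ∀ x : O ⧸ Ideal.span {ϖ^l'}, IsUnit (φ x) → IsUnit x := by
    intro x hx
    obtain ⟨y, rfl⟩ := Ideal.Quotient.mk_surjective x
    rw [show (Ideal.Quotient.mk (Ideal.span {ϖ^l'}) y) = mkl y from rfl] at hx ⊢
    rw [hφmk] at hx
    exact hunit_l y hx
  -- 2 is a unit
  have h2F : ((2:O ⧸ Ideal.span {ϖ})) ≠ 0 := by
    intro h20
    letI : Fintype (O ⧸ Ideal.span {ϖ}) := Fintype.ofFinite _
    have hq0 : ((Fintype.card (O ⧸ Ideal.span {ϖ}) : ℕ) : O ⧸ Ideal.span {ϖ}) = 0 :=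
      FiniteField.cast_card_eq_zero _
    rw [← Nat.card_eq_fintype_card, hq] at hq0
    obtain ⟨m, hm⟩ := hodd
    rw [hm] at hq0
    push_cast at hq0
    rw [h20] at hq0
    simp at hq0
  have h2unit : IsUnit (2 : O ⧸ Ideal.span {ϖ^r}) := by
    have h1 : IsUnit (mk1 (2:O)) := by
      rw [show mk1 (2:O) = (2 : O ⧸ Ideal.span {ϖ}) from map_ofNat _ 2]
      exact isUnit_iff_ne_zero.mpr h2F
    have h2 := hunit_r 2 h1
    rwa [show mkr (2:O) = (2 : O ⧸ Ideal.span {ϖ^r}) from map_ofNat _ 2] at h2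
  obtain ⟨half, hhalf⟩ := isUnit_iff_exists_inv.mp h2unit
  -- J facts
  have hJJ : Jr * Jr = -1 := Jmat_sq _ n hn
  set Jinv := -Jr with hJinvdef
  have hJi : Jr * Jinv = 1 := by rw [hJinvdef, Matrix.mul_neg, hJJ, neg_neg]
  have hJi' : Jinv * Jr = 1 := by rw [hJinvdef, Matrix.neg_mul, hJJ, neg_neg]
  -- β symplectic mod ϖ^r
  have hβO : β * Jmat O n + Jmat O n * βᵀ = 0 := hβ
  have hβrs : βr * Jr + Jr * βrᵀ = 0 := by
    have h1 := congrArg (RingHom.mapMatrix (m := Fin (2*n)) mkr) hβO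
    simp only [map_add, _root_.map_mul, map_zero, RingHom.mapMatrix_apply] at h1
    rw [Jmat_map mkr n, Matrix.transpose_map] at h1
    exact h1
  have hβσ : Jr * βrᵀ * Jinv = -βr := by
    have h1 : Jr * βrᵀ = -(βr * Jr) := eq_neg_of_add_eq_zero_right hβrs
    rw [h1, hJinvdef, Matrix.neg_mul, Matrix.mul_neg, neg_neg, Matrix.mul_assoc, hJJ,
      Matrix.mul_neg, Matrix.mul_one]
  -- sigma facts
  have hmXmX : ((-X : Polynomial (O ⧸ Ideal.span {ϖ^r})).comp (-X)) = X := by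
    rw [Polynomial.neg_comp, Polynomial.X_comp, neg_neg]
  have sig : ∀ Q : Polynomial (O ⧸ Ideal.span {ϖ^r}),
      Jr * (Polynomial.aeval βr Q)ᵀ * Jinv = Polynomial.aeval βr (Q.comp (-X)) := by
    intro Q
    rw [sigma_aeval Jr Jinv βr hJi hJi' hβσ Q, Polynomial.aeval_comp]
    simp
  have sig2 : ∀ Q : Polynomial (O ⧸ Ideal.span {ϖ^r}),
      Jr * (Polynomial.aeval βr (Q.comp (-X)))ᵀ * Jinv = Polynomial.aeval βr Q := by
    intro Q
    rw [sig (Q.comp (-X)), Polynomial.comp_assoc, hmXmX, Polynomial.comp_X]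
  -- symplectic characterizations
  have spOf : ∀ Xm : Matrix (Fin (2*n)) (Fin (2*n)) (O ⧸ Ideal.span {ϖ^r}),
      Xm * (Jr * Xmᵀ * Jinv) = 1 → Xm ∈ SpSet n (O ⧸ Ideal.span {ϖ^r}) := by
    intro Xm hXm
    constructor
    · have hdet := congrArg Matrix.det hXm
      rw [Matrix.det_mul, Matrix.det_one] at hdet
      exact IsUnit.of_mul_eq_one _ hdet
    · calc Xm * Jr * Xmᵀ = Xm * (Jr * Xmᵀ * Jinv) * Jr := by
            simp only [Matrix.mul_assoc]
            rw [hJi', Matrix.mul_one]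
        _ = Jr := by rw [hXm, Matrix.one_mul]
  have spTo : ∀ Xm : Matrix (Fin (2*n)) (Fin (2*n)) (O ⧸ Ideal.span {ϖ^r}),
      Xm * Jr * Xmᵀ = Jr → Xm * (Jr * Xmᵀ * Jinv) = 1 := by
    intro Xm hXm
    calc Xm * (Jr * Xmᵀ * Jinv) = (Xm * Jr * Xmᵀ) * Jinv := by simp only [Matrix.mul_assoc]
      _ = 1 := by rw [hXm, hJi]
  -- factor map facts
  have hfac_mk : ∀ x : O, fac (mkr x) = mkl x := fun x => Ideal.Quotient.factor_mk _ x
  have hfacsurj : Function.Surjective fac := by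
    intro y
    obtain ⟨x, rfl⟩ := Ideal.Quotient.mk_surjective y
    exact ⟨mkr x, hfac_mk x⟩
  have hfac0 : ∀ x : O ⧸ Ideal.span {ϖ^r}, x ∈ Ideal.span {d} → fac x = 0 := by
    intro x hx
    obtain ⟨y, rfl⟩ := Ideal.Quotient.mk_surjective x
    rw [show (Ideal.Quotient.mk (Ideal.span {ϖ^r}) y) = mkr y from rfl] at hx ⊢
    rw [hfac_mk]
    rw [hd] at hx
    exact (mem_span_mk_iff ϖ hl'r y).mp hx
  have hfac0' : ∀ x : O ⧸ Ideal.span {ϖ^r}, fac x = 0 → x ∈ Ideal.span {d} := by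
    intro x hx
    obtain ⟨y, rfl⟩ := Ideal.Quotient.mk_surjective x
    rw [show (Ideal.Quotient.mk (Ideal.span {ϖ^r}) y) = mkr y from rfl] at hx ⊢
    rw [hfac_mk] at hx
    rw [hd]
    exact (mem_span_mk_iff ϖ hl'r y).mpr hx
  -- main set equality
  ext g
  simp only [Set.mem_setOf_eq]
  constructor
  · rintro ⟨⟨hgdet, hgJ⟩, hgcm⟩
    -- exact commutation mod l'
    have hcommF : (g.map fac) * (βr.map fac) = (βr.map fac) * (g.map fac) := by
      have hmap0 : (RingHom.mapMatrix (m := Fin (2*n)) fac) (g * βr - βr * g) = 0 := by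
        ext i j
        simp only [RingHom.mapMatrix_apply, Matrix.map_apply, Matrix.zero_apply]
        exact hfac0 _ (hgcm i j)
      rw [map_sub, _root_.map_mul, _root_.map_mul, sub_eq_zero] at hmap0
      simp only [RingHom.mapMatrix_apply] at hmap0
      exact hmap0
    have hβlr : βr.map fac = β.map mkl := by
      ext i j
      simp only [hβrdef, Matrix.map_apply]
      exact hfac_mk _
    have hirrl : Irreducible (((βr.map fac).charpoly).map φ) := by
      rw [hβlr, Matrix.charpoly_map, Polynomial.map_map, hφmkl]
      exact hirr
    obtain ⟨Pb, hPb⟩ := cent hn2 φ hunitφ (βr.map fac) (g.map fac) hirrl hcommF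
    obtain ⟨P, hPP⟩ := Polynomial.map_surjective fac hfacsurj Pb
    set a := Polynomial.aeval βr P with ha
    have haf : a.map fac = g.map fac := by
      rw [ha, aeval_matrix_map, hPP, ← hPb]
    have hag : ∀ i j, (a - g) i j ∈ Ideal.span {d} := by
      intro i j
      apply hfac0'
      have h1 : fac ((a - g) i j) = (a.map fac) i j - (g.map fac) i j := by
        rw [Matrix.sub_apply, map_sub]
        rfl
      rw [h1, haf, sub_self]
    -- sigma objects
    set P' := P.comp (-X) with hP'def
    set aσ := Polynomial.aeval βr P' with haσ
    have hσa : Jr * aᵀ * Jinv = aσ := sig P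
    set σg := Jr * gᵀ * Jinv with hσgdef
    have hgσ1 : g * σg = 1 := spTo g hgJ
    have hentσ : ∀ i j, (aσ - σg) i j ∈ Ideal.span {d} := by
      have hrw : aσ - σg = Jr * (a - g)ᵀ * Jinv := by
        rw [← hσa, hσgdef, Matrix.transpose_sub, Matrix.mul_sub, Matrix.sub_mul]
      intro i j
      rw [hrw]
      exact ent_mul_right _ Jinv (ent_mul_left _ Jr (fun i j => hag j i)) i j
    set EP := P * P' - 1 with hEPdef
    set e := Polynomial.aeval βr EP with hedef
    have heaσ : e = a * aσ - 1 := by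
      rw [hedef, hEPdef, map_sub, _root_.map_one, _root_.map_mul]
    have hente : ∀ i j, e i j ∈ Ideal.span {d} := by
      have hexp : a*aσ - g*σg = a*(aσ - σg) + (a - g)*σg := by noncomm_ring
      have he2 : e = a*(aσ - σg) + (a - g)*σg := by rw [heaσ, ← hgσ1, hexp]
      intro i j
      rw [he2]
      exact Ideal.add_mem _ (ent_mul_left _ a hentσ i j) (ent_mul_right _ σg hag i j)
    have hd3 : d^3 = 0 := by
      rw [hd, ← map_pow, ← pow_mul, Ideal.Quotient.eq_zero_iff_mem]
      exact Ideal.mem_span_singleton.mpr (pow_dvd_pow ϖ h3l')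
    have hcube : e^3 = 0 := ent_cube_zero hd3 hente
    -- polynomial gadgets
    set ch : Polynomial (O ⧸ Ideal.span {ϖ^r}) := C half with hchdef
    have h2ch : 2 * ch = 1 := by
      rw [hchdef, show (2 : Polynomial (O ⧸ Ideal.span {ϖ^r})) = C 2 from (map_ofNat _ 2).symm,
        ← C_mul, hhalf, C_1]
    set YP := ch * EP - ch^3 * EP^2 with hYPdef
    set SI := 1 - YP + YP^2 with hSIdef
    set y := Polynomial.aeval βr YP with hydef
    have hCs : ∀ (x : O ⧸ Ideal.span {ϖ^r}) (Q : Polynomial (O ⧸ Ideal.span {ϖ^r})),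
        Polynomial.aeval βr (C x * Q) = x • Polynomial.aeval βr Q := by
      intro x Q
      rw [_root_.map_mul, Polynomial.aeval_C, Algebra.smul_def]
    have henty : ∀ i j, y i j ∈ Ideal.span {d} := by
      have hch3 : ch^3 = C (half^3) := by rw [hchdef, ← map_pow]
      have hyrw : y = half • e - (half^3) • (e * e) := by
        rw [hydef, hYPdef, map_sub, hchdef, hCs, hch3, hCs, ← hedef]
        congr 1
        rw [pow_two, _root_.map_mul, ← hedef]
      intro i j
      rw [hyrw, Matrix.sub_apply, Matrix.smul_apply, Matrix.smul_apply, smul_eq_mul, smul_eq_mul]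
      exact Ideal.sub_mem _ (Ideal.mul_mem_left _ _ (hente i j))
        (Ideal.mul_mem_left _ _ (ent_mul_left _ e hente i j))
    -- t and tσ
    set t := Polynomial.aeval βr (P * SI) with htdef
    set tσ := Polynomial.aeval βr ((P * SI).comp (-X)) with htσdef
    have hσt : Jr * tᵀ * Jinv = tσ := sig (P*SI)
    have hσtσ : Jr * tσᵀ * Jinv = t := sig2 (P*SI)
    have hP'c : P'.comp (-X) = P := by
      rw [hP'def, Polynomial.comp_assoc, hmXmX, Polynomial.comp_X]
    have hEPc : EP.comp (-X) = EP := by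
      rw [hEPdef, Polynomial.sub_comp, Polynomial.mul_comp, Polynomial.one_comp, hP'c, ← hP'def]
      ring
    have hYPc : YP.comp (-X) = YP := by
      rw [hYPdef, Polynomial.sub_comp, Polynomial.mul_comp, Polynomial.mul_comp,
        Polynomial.pow_comp, Polynomial.pow_comp, hEPc, hchdef, Polynomial.C_comp]
    have hSIc : SI.comp (-X) = SI := by
      rw [hSIdef, Polynomial.add_comp, Polynomial.sub_comp, Polynomial.one_comp,
        Polynomial.pow_comp, hYPc]
    have hcompPSI : (P * SI).comp (-X) = P' * SI := by
      rw [Polynomial.mul_comp, hSIc, ← hP'def]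
    have httσ : t * tσ = 1 := by
      rw [htdef, htσdef, hcompPSI, ← _root_.map_mul]
      have hre : (P * SI) * (P' * SI) = (1 + EP) * (SI^2) := by
        rw [hEPdef]; ring
      rw [hre]
      obtain ⟨W, hW⟩ := main_id ch EP h2ch
      have hre2 : (1 + EP) * (SI^2) = 1 + EP^3 * W := by
        rw [hSIdef, hYPdef]; exact hW
      rw [hre2, map_add, _root_.map_one, _root_.map_mul, map_pow, ← hedef, hcube,
        Matrix.zero_mul, add_zero]
    have htσt : tσ * t = 1 := by
      have hcomm : tσ * t = t * tσ := by
        rw [htdef, htσdef, ← _root_.map_mul, ← _root_.map_mul]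
        exact congrArg _ (mul_comm _ _)
      rw [hcomm, httσ]
    have htSp : t ∈ SpSet n (O ⧸ Ideal.span {ϖ^r}) := by
      apply spOf
      rw [hσt]
      exact httσ
    set h := tσ * g with hhdef
    have hgth : g = t * h := by
      rw [hhdef, ← Matrix.mul_assoc, httσ, Matrix.one_mul]
    have hσh : Jr * hᵀ * Jinv = σg * t := by
      rw [hhdef, Matrix.transpose_mul]
      calc Jr * (gᵀ * tσᵀ) * Jinv = (Jr * gᵀ * Jinv) * (Jr * tσᵀ * Jinv) := by
            simp only [Matrix.mul_assoc]
            rw [← Matrix.mul_assoc Jinv Jr, hJi', Matrix.one_mul]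
        _ = σg * t := by rw [hσtσ, hσgdef]
    have hhSp : h ∈ SpSet n (O ⧸ Ideal.span {ϖ^r}) := by
      apply spOf
      rw [hσh]
      calc h * (σg * t) = tσ * (g * σg) * t := by
            rw [hhdef, Matrix.mul_assoc tσ g (σg * t), ← Matrix.mul_assoc g σg t,
              ← Matrix.mul_assoc tσ (g * σg) t]
        _ = 1 := by rw [hgσ1, Matrix.mul_one, htσt]
    have hath : ∀ i j, (h - 1) i j ∈ Ideal.span {d} := by
      have hps : P - P * SI = P * (YP - YP * YP) := by
        rw [hSIdef]; ring
      have hat : a - t = a * (y - y * y) := by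
        rw [ha, htdef, hydef, ← map_sub, hps, _root_.map_mul, map_sub, _root_.map_mul]
      have hatent : ∀ i j, (a - t) i j ∈ Ideal.span {d} := by
        intro i j
        rw [hat]
        refine ent_mul_left _ a ?_ i j
        intro i' j'
        rw [Matrix.sub_apply]
        exact Ideal.sub_mem _ (henty i' j') (ent_mul_left _ y henty i' j')
      have hgt : ∀ i j, (g - t) i j ∈ Ideal.span {d} := by
        intro i j
        have hsplit : g - t = (a - t) - (a - g) := by abel
        rw [hsplit, Matrix.sub_apply]
        exact Ideal.sub_mem _ (hatent i j) (hag i j)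
      have hht1 : h - 1 = tσ * (g - t) := by
        rw [hhdef, Matrix.mul_sub, htσt]
      intro i j
      rw [hht1]
      exact ent_mul_left _ tσ hgt i j
    have htadj : t ∈ Algebra.adjoin (O ⧸ Ideal.span {ϖ^r}) {βr} := by
      rw [Algebra.adjoin_singleton_eq_range_aeval]
      exact ⟨P * SI, htdef.symm⟩
    clear_value t tσ h
    exact ⟨t, htSp, htadj, h, hhSp, hath, hgth⟩
  · rintro ⟨t, ⟨htdet, htJ⟩, htadj, h, ⟨hhdet, hhJ⟩, hh1, rfl⟩
    refine ⟨⟨?_, ?_⟩, ?_⟩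
    · rw [Matrix.det_mul]
      exact htdet.mul hhdet
    · have expand : t*h*Jr*(t*h)ᵀ = t*(h*Jr*hᵀ)*tᵀ := by
        rw [Matrix.transpose_mul]
        noncomm_ring
      rw [expand, hhJ, htJ]
    · rw [Algebra.adjoin_singleton_eq_range_aeval] at htadj
      obtain ⟨Q, hQ0⟩ := htadj
      have hQ : Polynomial.aeval βr Q = t := hQ0
      have htβ : t * βr = βr * t := by
        calc t * βr = Polynomial.aeval βr (Q * X) := by
              rw [← hQ, _root_.map_mul, Polynomial.aeval_X]
          _ = βr * t := by rw [mul_comm Q X, _root_.map_mul, Polynomial.aeval_X, hQ]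
      intro i j
      have expand2 : t*h*βr - βr*(t*h) = t*((h-1)*βr - βr*(h-1)) + (t*βr - βr*t)*h := by
        noncomm_ring
      rw [expand2, htβ, sub_self, Matrix.zero_mul, add_zero]
      refine ent_mul_left _ t ?_ i j
      intro i' j'
      rw [Matrix.sub_apply]
      exact Ideal.sub_mem _ (ent_mul_right _ βr hh1 i' j') (ent_mul_left _ βr hh1 i' j')
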